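/- arXiv:2505.12003 — 3 statements merged into one kernel-verified Lean document; each statement's English description precedes it below -/
import Mathlib

section
/- Let d ∈ ℕ, σ = ReLU, and X ⊂ ℝ^d be a compact set with at least two points. Then for every 1-Lipschitz function f : X → ℝ (with respect to the Euclidean ℓ² norms) and every ε > 0, there exists a function g ∈ G_{d,σ}(X,ℝ), i.e. a 1-Lipschitz function of the form g = vᵀ ∘ Φ_L ∘ ⋯ ∘ Φ_1 ∘ Q with h, L ∈ ℕ, Q(x) = Q̂x + q̂ an affine map with Q̂ ∈ ℝ^{h×d}, q̂ ∈ ℝ^h, each Φ_ℓ ∈ E_{h,σ}, and v ∈ ℝ^h with ‖v‖₂ = 1, such that max_{x∈X} |f(x) − g(x)| < ε. -/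
open scoped BigOperators

noncomputable section

def relu (t : ℝ) : ℝ := max t 0

def entrywise {n : ℕ} (σ : ℝ → ℝ) (x : EuclideanSpace ℝ (Fin n)) : EuclideanSpace ℝ (Fin n) :=
  WithLp.toLp 2 (fun i => σ (x i))

def matVec {k h : ℕ} (W : Matrix (Fin k) (Fin h) ℝ) (x : EuclideanSpace ℝ (Fin h)) :
    EuclideanSpace ℝ (Fin k) :=
  Matrix.toEuclideanLin W x

/-- Spectral norm of a real matrix, as the operator norm between Euclidean spaces. -/
def specNorm {k h : ℕ} (W : Matrix (Fin k) (Fin h) ℝ) : ℝ :=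
  ‖LinearMap.toContinuousLinearMap (Matrix.toEuclideanLin W)‖

/-- Membership in `E_{h,σ}` with `σ = ReLU`. -/
def IsEulerStep {h : ℕ} (Φ : EuclideanSpace ℝ (Fin h) → EuclideanSpace ℝ (Fin h)) : Prop :=
  ∃ (k : ℕ) (W : Matrix (Fin k) (Fin h) ℝ) (b : EuclideanSpace ℝ (Fin k)) (τ : ℝ),
    0 ≤ τ ∧ τ ≤ 2 ∧ specNorm W ≤ 1 ∧
    ∀ x, Φ x = x - τ • matVec W.transpose (entrywise relu (matVec W x + b))

def compChain {α : Type*} : (L : ℕ) → (Fin L → α → α) → α → α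
  | 0, _, x => x
  | L + 1, Φ, x => Φ (Fin.last L) (compChain L (fun i => Φ i.castSucc) x)

/-- Membership in `G_{d,σ}(X,ℝ)` with `σ = ReLU`. -/
def InG {d : ℕ} (X : Set (EuclideanSpace ℝ (Fin d))) (g : EuclideanSpace ℝ (Fin d) → ℝ) : Prop :=
  LipschitzOnWith 1 g X ∧
  ∃ (h L : ℕ) (Qhat : Matrix (Fin h) (Fin d) ℝ) (qhat : EuclideanSpace ℝ (Fin h))
    (Φ : Fin L → (EuclideanSpace ℝ (Fin h) → EuclideanSpace ℝ (Fin h)))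
    (v : EuclideanSpace ℝ (Fin h)),
    (∀ ℓ, IsEulerStep (Φ ℓ)) ∧ ‖v‖ = 1 ∧
    ∀ x ∈ X, g x = ∑ i, v i * compChain L Φ (matVec Qhat x + qhat) i

def concatE {h₁ h₂ : ℕ} (u : EuclideanSpace ℝ (Fin h₁)) (v : EuclideanSpace ℝ (Fin h₂)) :
    EuclideanSpace ℝ (Fin (h₁ + h₂)) :=
  WithLp.toLp 2 (Fin.append (fun i => u i) (fun i => v i))

/-- The residual blocks in `Ẽ_{h,σ}`: `(max{x₁,x₂}, min{x₁,x₂}, x₃, Φ'(x₄,…,x_{h+3}))`. -/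
def tildeLayer {h : ℕ} (Φ' : EuclideanSpace ℝ (Fin h) → EuclideanSpace ℝ (Fin h))
    (x : EuclideanSpace ℝ (Fin (h + 3))) : EuclideanSpace ℝ (Fin (h + 3)) :=
  WithLp.toLp 2 (fun j : Fin (h + 3) =>
    if _h0 : (j : ℕ) = 0 then max (x ⟨0, by omega⟩) (x ⟨1, by omega⟩)
    else if _h1 : (j : ℕ) = 1 then min (x ⟨0, by omega⟩) (x ⟨1, by omega⟩)
    else if _h2 : (j : ℕ) = 2 then x ⟨2, by omega⟩
    else Φ' (WithLp.toLp 2 (fun i : Fin h => x ⟨(i : ℕ) + 3, by have := i.isLt; omega⟩))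
      ⟨(j : ℕ) - 3, by have := j.isLt; omega⟩)

/-- Membership in `Ẽ_{h,σ}` with `σ = ReLU`. -/
def IsTildeLayer {h : ℕ} (Φ : EuclideanSpace ℝ (Fin (h + 3)) → EuclideanSpace ℝ (Fin (h + 3))) :
    Prop :=
  ∃ Φ', IsEulerStep Φ' ∧ ∀ x, Φ x = tildeLayer Φ' x

def emb0 {n : ℕ} : Fin 1 → Fin (n + 3) := fun _ => ⟨0, by omega⟩
def emb1 {n : ℕ} : Fin 1 → Fin (n + 3) := fun _ => ⟨1, by omega⟩
def emb2 {n : ℕ} : Fin 1 → Fin (n + 3) := fun _ => ⟨2, by omega⟩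
def embT {n : ℕ} : Fin n → Fin (n + 3) := fun i => ⟨(i : ℕ) + 3, by have := i.isLt; omega⟩

/-- Membership in `R_{d,m}` for `m = (1,1,1,n)`: each block row of the matrix has spectral
norm at most `1`. -/
def memRm {d n : ℕ} (Q : Matrix (Fin (n + 3)) (Fin d) ℝ) : Prop :=
  specNorm (Q.submatrix emb0 id) ≤ 1 ∧ specNorm (Q.submatrix emb1 id) ≤ 1 ∧
    specNorm (Q.submatrix emb2 id) ≤ 1 ∧ specNorm (Q.submatrix embT id) ≤ 1

def rowBlockSum {n r : ℕ} (A : Matrix (Fin (n + 3)) (Fin (n + 3)) ℝ)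
    (e : Fin r → Fin (n + 3)) : ℝ :=
  specNorm (A.submatrix e emb0) + specNorm (A.submatrix e emb1) +
    specNorm (A.submatrix e emb2) + specNorm (A.submatrix e embT)

/-- Membership in `L_m` for `m = (1,1,1,n)`: for each block row, the sum of the spectral
norms of the blocks is at most `1`. -/
def memLm {n : ℕ} (A : Matrix (Fin (n + 3)) (Fin (n + 3)) ℝ) : Prop :=
  rowBlockSum A emb0 ≤ 1 ∧ rowBlockSum A emb1 ≤ 1 ∧
    rowBlockSum A emb2 ≤ 1 ∧ rowBlockSum A embT ≤ 1

/-- `Φ_{L+1} ∘ A_L ∘ ⋯ ∘ Φ₂ ∘ A₁ ∘ Φ₁`, the alternating composition. -/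
def altChain {α : Type*} : (L : ℕ) → (Fin (L + 1) → α → α) → (Fin L → α → α) → α → α
  | 0, Φ, _, x => Φ 0 x
  | L + 1, Φ, A, x =>
      Φ (Fin.last (L + 1)) (A (Fin.last L)
        (altChain L (fun i => Φ i.castSucc) (fun i => A i.castSucc) x))

/-- Membership in the fixed-width class `tilde-G_{d,σ,n+3}(X,ℝ)` with `σ = ReLU`. -/
def InTildeG {d n : ℕ} (X : Set (EuclideanSpace ℝ (Fin d)))
    (g : EuclideanSpace ℝ (Fin d) → ℝ) : Prop :=
  ∃ (L : ℕ) (Qhat : Matrix (Fin (n + 3)) (Fin d) ℝ) (qhat : EuclideanSpace ℝ (Fin (n + 3)))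
    (Φ : Fin (L + 1) → (EuclideanSpace ℝ (Fin (n + 3)) → EuclideanSpace ℝ (Fin (n + 3))))
    (Ahat : Fin L → Matrix (Fin (n + 3)) (Fin (n + 3)) ℝ)
    (ahat : Fin L → EuclideanSpace ℝ (Fin (n + 3)))
    (v : EuclideanSpace ℝ (Fin (n + 3))),
    memRm Qhat ∧ (∀ ℓ, IsTildeLayer (Φ ℓ)) ∧ (∀ ℓ, memLm (Ahat ℓ)) ∧ (∑ i, |v i|) ≤ 1 ∧
    ∀ x ∈ X,
      g x = ∑ i, v i *
        altChain L Φ (fun ℓ u => matVec (Ahat ℓ) u + ahat ℓ) (matVec Qhat x + qhat) i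

end

noncomputable section
namespace Stmt0Aux

/-! ### Folding lemmas for `List.foldl` with `min`/`max` -/

section folds
variable {α : Type*}

lemma foldl_min_comp (l : List α) (F G : α → ℝ) (D : ℝ)
    (h : ∀ j ∈ l, F j ≤ G j + D) :
    ∀ b b' : ℝ, b ≤ b' + D →
      l.foldl (fun acc j => min acc (F j)) b ≤ l.foldl (fun acc j => min acc (G j)) b' + D := by
  induction l with
  | nil => intro b b' hb; simpa using hb
  | cons j t ih =>
    intro b b' hb
    simp only [List.foldl_cons]
    refine ih (fun a ha => h a (List.mem_cons_of_mem _ ha)) _ _ ?_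
    have h1 := h j (List.mem_cons_self)
    have : min b (F j) ≤ min (b' + D) (G j + D) := min_le_min hb h1
    simpa [min_add_add_right] using this

lemma foldl_max_comp (l : List α) (F G : α → ℝ) (D : ℝ)
    (h : ∀ j ∈ l, F j ≤ G j + D) :
    ∀ b b' : ℝ, b ≤ b' + D →
      l.foldl (fun acc j => max acc (F j)) b ≤ l.foldl (fun acc j => max acc (G j)) b' + D := by
  induction l with
  | nil => intro b b' hb; simpa using hb
  | cons j t ih =>
    intro b b' hb
    simp only [List.foldl_cons]
    refine ih (fun a ha => h a (List.mem_cons_of_mem _ ha)) _ _ ?_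
    have h1 := h j (List.mem_cons_self)
    have : max b (F j) ≤ max (b' + D) (G j + D) := max_le_max hb h1
    simpa [max_add_add_right] using this

lemma foldl_min_congr (l : List α) (F G : α → ℝ) (b : ℝ)
    (h : ∀ j ∈ l, F j = G j) :
    l.foldl (fun acc j => min acc (F j)) b = l.foldl (fun acc j => min acc (G j)) b := by
  refine le_antisymm ?_ ?_
  · have := foldl_min_comp l F G 0 (fun j hj => by rw [h j hj, add_zero]) b b (by simp)
    simpa using this
  · have := foldl_min_comp l G F 0 (fun j hj => by rw [h j hj, add_zero]) b b (by simp)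
    simpa using this

lemma foldl_max_congr (l : List α) (F G : α → ℝ) (b : ℝ)
    (h : ∀ j ∈ l, F j = G j) :
    l.foldl (fun acc j => max acc (F j)) b = l.foldl (fun acc j => max acc (G j)) b := by
  refine le_antisymm ?_ ?_
  · have := foldl_max_comp l F G 0 (fun j hj => by rw [h j hj, add_zero]) b b (by simp)
    simpa using this
  · have := foldl_max_comp l G F 0 (fun j hj => by rw [h j hj, add_zero]) b b (by simp)
    simpa using this

lemma foldl_min_le_init (l : List α) (F : α → ℝ) (b : ℝ) :
    l.foldl (fun acc j => min acc (F j)) b ≤ b := by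
  induction l generalizing b with
  | nil => simp
  | cons j t ih =>
    simp only [List.foldl_cons]
    exact le_trans (ih _) (min_le_left _ _)

lemma foldl_min_le_mem (l : List α) (F : α → ℝ) {j : α} (hj : j ∈ l) :
    ∀ b : ℝ, l.foldl (fun acc j => min acc (F j)) b ≤ F j := by
  induction l with
  | nil => simp at hj
  | cons a t ih =>
    intro b
    simp only [List.foldl_cons]
    rcases List.mem_cons.1 hj with rfl | hj
    · exact le_trans (foldl_min_le_init _ _ _) (min_le_right _ _)
    · exact ih hj _

lemma le_foldl_min (l : List α) (F : α → ℝ) (c : ℝ)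
    (h : ∀ j ∈ l, c ≤ F j) :
    ∀ b : ℝ, c ≤ b → c ≤ l.foldl (fun acc j => min acc (F j)) b := by
  induction l with
  | nil => intro b hb; simpa using hb
  | cons a t ih =>
    intro b hb
    simp only [List.foldl_cons]
    exact ih (fun j hj => h j (List.mem_cons_of_mem _ hj)) _
      (le_min hb (h a (List.mem_cons_self)))

lemma init_le_foldl_max (l : List α) (F : α → ℝ) (b : ℝ) :
    b ≤ l.foldl (fun acc j => max acc (F j)) b := by
  induction l generalizing b with
  | nil => simp
  | cons j t ih =>
    simp only [List.foldl_cons]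
    exact le_trans (le_max_left _ _) (ih _)

lemma mem_le_foldl_max (l : List α) (F : α → ℝ) {j : α} (hj : j ∈ l) :
    ∀ b : ℝ, F j ≤ l.foldl (fun acc j => max acc (F j)) b := by
  induction l with
  | nil => simp at hj
  | cons a t ih =>
    intro b
    simp only [List.foldl_cons]
    rcases List.mem_cons.1 hj with rfl | hj
    · exact le_trans (le_max_right _ _) (init_le_foldl_max _ _ _)
    · exact ih hj _

lemma foldl_max_le (l : List α) (F : α → ℝ) (c : ℝ)
    (h : ∀ j ∈ l, F j ≤ c) :
    ∀ b : ℝ, b ≤ c → l.foldl (fun acc j => max acc (F j)) b ≤ c := by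
  induction l with
  | nil => intro b hb; simpa using hb
  | cons a t ih =>
    intro b hb
    simp only [List.foldl_cons]
    exact ih (fun j hj => h j (List.mem_cons_of_mem _ hj)) _
      (max_le hb (h a (List.mem_cons_self)))

end folds

end Stmt0Aux
end

noncomputable section
namespace Stmt0Aux
variable {h : ℕ}

/-- The sorting fold: puts the min of coordinates `a, b` at `a` and the max at `b`. -/
def foldmap (a b : Fin h) (s : EuclideanSpace ℝ (Fin h)) : EuclideanSpace ℝ (Fin h) :=
  WithLp.toLp 2 (fun c => if c = a then min (s a) (s b) else if c = b then max (s a) (s b) else s c)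

lemma foldmap_apply_ne (a b : Fin h) (s : EuclideanSpace ℝ (Fin h)) {c : Fin h}
    (hca : c ≠ a) (hcb : c ≠ b) : foldmap a b s c = s c := by
  simp [foldmap, hca, hcb]

lemma foldmap_apply_fst (a b : Fin h) (s : EuclideanSpace ℝ (Fin h)) :
    foldmap a b s a = min (s a) (s b) := by simp [foldmap]

lemma foldmap_apply_snd (a b : Fin h) (hab : a ≠ b) (s : EuclideanSpace ℝ (Fin h)) :
    foldmap a b s b = max (s a) (s b) := by simp [foldmap, Ne.symm hab]

lemma matVec_apply {k : ℕ} (W : Matrix (Fin k) (Fin h) ℝ) (x : EuclideanSpace ℝ (Fin h))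
    (i : Fin k) : matVec W x i = ∑ c, W i c * x c := rfl

lemma sum_ite_two {a b : Fin h} (hab : a ≠ b) (f g : ℝ) :
    ∑ c : Fin h, (if c = a then f else if c = b then g else 0) = f + g := by
  have : ∀ c : Fin h, (if c = a then f else if c = b then g else 0)
      = (if c = a then f else 0) + (if c = b then g else 0) := by
    intro c
    by_cases hca : c = a <;> by_cases hcb : c = b <;> simp_all
  rw [Finset.sum_congr rfl (fun c _ => this c), Finset.sum_add_distrib]
  simp [Finset.sum_ite_eq']

lemma isEulerStep_foldmap {a b : Fin h} (hab : a ≠ b) : IsEulerStep (foldmap a b) := by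
  classical
  obtain ⟨r, hr2, hrpos⟩ : ∃ r : ℝ, r * r = 2⁻¹ ∧ 0 < r :=
    ⟨(Real.sqrt 2)⁻¹, by rw [← mul_inv, Real.mul_self_sqrt (by norm_num : (0:ℝ) ≤ 2)],
      by positivity⟩
  set w : Fin h → ℝ := fun c => if c = a then r else if c = b then -r else 0 with hw
  set W : Matrix (Fin 1) (Fin h) ℝ := Matrix.of (fun _ c => w c) with hW
  have hwa : w a = r := by simp [hw]
  have hwb : w b = -r := by simp [hw, Ne.symm hab]
  have hwo : ∀ c : Fin h, c ≠ a → c ≠ b → w c = 0 := by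
    intro c h1 h2; simp [hw, h1, h2]
  have hWe : ∀ c : Fin h, W 0 c = w c := fun c => rfl
  have hWt : ∀ (y : EuclideanSpace ℝ (Fin 1)) (c : Fin h),
      matVec W.transpose y c = w c * y 0 := by
    intro y c
    rw [matVec_apply, Fin.sum_univ_one]
    rfl
  have hWx : ∀ x : EuclideanSpace ℝ (Fin h), matVec W x 0 = r * (x a - x b) := by
    intro x
    rw [matVec_apply]
    have : ∀ c : Fin h, W 0 c * x c
        = if c = a then r * x a else if c = b then -(r * x b) else 0 := by
      intro c
      rw [hWe]
      by_cases hca : c = a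
      · subst hca; rw [hwa]; simp
      · by_cases hcb : c = b
        · subst hcb; rw [hwb]; simp [hca]
        · rw [hwo c hca hcb]; simp [hca, hcb]
    rw [Finset.sum_congr rfl (fun c _ => this c), sum_ite_two hab]
    ring
  refine ⟨1, W, 0, 2, by norm_num, le_refl _, ?_, ?_⟩
  · -- spectral norm bound
    rw [specNorm]
    refine ContinuousLinearMap.opNorm_le_bound _ zero_le_one (fun x => ?_)
    rw [one_mul]
    have hx : (LinearMap.toContinuousLinearMap (Matrix.toEuclideanLin W)) x = matVec W x := rfl
    rw [hx]
    have h1 : ‖matVec W x‖ = |matVec W x 0| := by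
      simp [EuclideanSpace.norm_eq, Fin.sum_univ_one, Real.sqrt_sq_eq_abs]
    rw [h1, matVec_apply]
    have h2 : ∑ c, W 0 c * x c
        = (inner ℝ ((WithLp.equiv 2 _).symm w : EuclideanSpace ℝ (Fin h)) x : ℝ) := by
      simp only [PiLp.inner_apply, RCLike.inner_apply]
      refine Finset.sum_congr rfl (fun c _ => ?_)
      rw [hWe]
      have : (starRingEnd ℝ) (((WithLp.equiv 2 _).symm w : EuclideanSpace ℝ (Fin h)) c) = w c := by
        simp
      rw [this, mul_comm]
    rw [h2]
    have h4 : ‖((WithLp.equiv 2 _).symm w : EuclideanSpace ℝ (Fin h))‖ = 1 := by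
      rw [EuclideanSpace.norm_eq]
      have h5 : ∀ c : Fin h, ‖((WithLp.equiv 2 _).symm w : EuclideanSpace ℝ (Fin h)) c‖ ^ 2
          = if c = a then r ^ 2 else if c = b then r ^ 2 else 0 := by
        intro c
        have hc : ((WithLp.equiv 2 _).symm w : EuclideanSpace ℝ (Fin h)) c = w c := rfl
        rw [hc]
        by_cases hca : c = a
        · subst hca; rw [hwa]; simp [sq_abs]
        · by_cases hcb : c = b
          · subst hcb; rw [hwb]; simp [hca, sq_abs]
          · rw [hwo c hca hcb]; simp [hca, hcb]
      rw [Finset.sum_congr rfl (fun c _ => h5 c), sum_ite_two hab]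
      rw [sq, hr2]
      norm_num
    calc |(inner ℝ ((WithLp.equiv 2 _).symm w : EuclideanSpace ℝ (Fin h)) x : ℝ)|
        ≤ ‖((WithLp.equiv 2 _).symm w : EuclideanSpace ℝ (Fin h))‖ * ‖x‖ :=
          abs_real_inner_le_norm _ _
      _ = ‖x‖ := by rw [h4, one_mul]
  · -- formula
    intro x
    ext c
    have hy : entrywise relu (matVec W x + 0) 0 = max (r * (x a - x b)) 0 := by
      simp only [entrywise, relu, add_zero]
      rw [hWx]
    have hrhs : (x - (2:ℝ) • matVec W.transpose (entrywise relu (matVec W x + 0))) c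
        = x c - 2 * (w c * max (r * (x a - x b)) 0) := by
      have e1 : (x - (2:ℝ) • matVec W.transpose (entrywise relu (matVec W x + 0))) c
          = x c - 2 * (matVec W.transpose (entrywise relu (matVec W x + 0)) c) := by
        simp
      rw [e1, hWt, hy]
    rw [hrhs]
    rcases le_or_gt (x a) (x b) with hle | hlt
    · have hmax : max (r * (x a - x b)) 0 = 0 := by
        apply max_eq_right
        nlinarith
      rw [hmax]
      by_cases hca : c = a
      · subst hca; rw [foldmap_apply_fst, min_eq_left hle]; ring
      · by_cases hcb : c = b
        · subst hcb; rw [foldmap_apply_snd _ _ hab, max_eq_right hle]; ring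
        · rw [foldmap_apply_ne _ _ _ hca hcb]; ring
    · have hmax : max (r * (x a - x b)) 0 = r * (x a - x b) := by
        apply max_eq_left
        nlinarith
      rw [hmax]
      by_cases hca : c = a
      · subst hca
        rw [foldmap_apply_fst, min_eq_right (le_of_lt hlt), hwa]
        nlinarith [hr2]
      · by_cases hcb : c = b
        · subst hcb
          rw [foldmap_apply_snd _ _ hab, max_eq_left (le_of_lt hlt), hwb]
          nlinarith [hr2]
        · rw [foldmap_apply_ne _ _ _ hca hcb, hwo c hca hcb]
          ring

end Stmt0Aux
end

noncomputable section
namespace Stmt0Aux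
variable {h : ℕ}

def applyOps (l : List (Fin h × Fin h)) (s : EuclideanSpace ℝ (Fin h)) :
    EuclideanSpace ℝ (Fin h) :=
  l.foldl (fun s op => foldmap op.1 op.2 s) s

lemma applyOps_nil (s : EuclideanSpace ℝ (Fin h)) : applyOps [] s = s := rfl

lemma applyOps_cons (op : Fin h × Fin h) (l : List (Fin h × Fin h))
    (s : EuclideanSpace ℝ (Fin h)) :
    applyOps (op :: l) s = applyOps l (foldmap op.1 op.2 s) := rfl

lemma applyOps_append (l₁ l₂ : List (Fin h × Fin h)) (s : EuclideanSpace ℝ (Fin h)) :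
    applyOps (l₁ ++ l₂) s = applyOps l₂ (applyOps l₁ s) := by
  simp [applyOps, List.foldl_append]

/-- Realizability as a composition chain of Euler steps. -/
def Realizable (F : EuclideanSpace ℝ (Fin h) → EuclideanSpace ℝ (Fin h)) : Prop :=
  ∃ (L : ℕ) (Φ : Fin L → (EuclideanSpace ℝ (Fin h) → EuclideanSpace ℝ (Fin h))),
    (∀ ℓ, IsEulerStep (Φ ℓ)) ∧ ∀ x, compChain L Φ x = F x

lemma compChain_congr : ∀ (L : ℕ) (Φ Ψ : Fin L → (EuclideanSpace ℝ (Fin h) → EuclideanSpace ℝ (Fin h))),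
    (∀ i, Φ i = Ψ i) → ∀ x, compChain L Φ x = compChain L Ψ x := by
  intro L
  induction L with
  | zero => intro _ _ _ _; rfl
  | succ L ih =>
    intro Φ Ψ hΦ x
    show Φ (Fin.last L) _ = Ψ (Fin.last L) _
    rw [hΦ, ih (fun i => Φ i.castSucc) (fun i => Ψ i.castSucc) (fun i => hΦ i.castSucc)]

lemma Realizable.id : Realizable (h := h) id := ⟨0, Fin.elim0, fun ℓ => ℓ.elim0, fun _ => rfl⟩

lemma Realizable.step {F Ψ : EuclideanSpace ℝ (Fin h) → EuclideanSpace ℝ (Fin h)}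
    (hF : Realizable F) (hΨ : IsEulerStep Ψ) : Realizable (Ψ ∘ F) := by
  obtain ⟨L, Φ, hΦ, hc⟩ := hF
  refine ⟨L + 1, Fin.snoc Φ Ψ, ?_, ?_⟩
  · intro ℓ
    refine Fin.lastCases ?_ ?_ ℓ
    · rw [Fin.snoc_last]; exact hΨ
    · intro i; rw [Fin.snoc_castSucc]; exact hΦ i
  · intro x
    show (Fin.snoc Φ Ψ : Fin (L+1) → _) (Fin.last L) (compChain L (fun i => (Fin.snoc Φ Ψ : Fin (L+1) → _) i.castSucc) x) = Ψ (F x)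
    rw [Fin.snoc_last]
    congr 1
    rw [compChain_congr L _ Φ (fun i => by simp), hc]

lemma realizable_applyOps (l : List (Fin h × Fin h)) (hl : ∀ op ∈ l, op.1 ≠ op.2) :
    Realizable (fun s => applyOps l s) := by
  induction l using List.reverseRecOn with
  | nil => exact Realizable.id
  | append_singleton l op ih =>
    have h1 : Realizable (fun s => applyOps l s) :=
      ih (fun o ho => hl o (by simp [ho]))
    have h2 : IsEulerStep (foldmap op.1 op.2) :=
      isEulerStep_foldmap (hl op (by simp))
    have := h1.step h2
    convert this using 1
    funext s
    show applyOps (l ++ [op]) s = foldmap op.1 op.2 (applyOps l s)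
    rw [applyOps_append]
    rfl

/-- Cells not touched by the ops are unchanged. -/
lemma applyOps_apply_notMem (l : List (Fin h × Fin h)) {c : Fin h}
    (hc : ∀ op ∈ l, c ≠ op.1 ∧ c ≠ op.2) :
    ∀ s, applyOps l s c = s c := by
  induction l with
  | nil => intro s; rfl
  | cons op t ih =>
    intro s
    rw [applyOps_cons]
    rw [ih (fun o ho => hc o (List.mem_cons_of_mem _ ho))]
    exact foldmap_apply_ne _ _ _ (hc op (List.mem_cons_self)).1
      (hc op (List.mem_cons_self)).2

/-- Accumulating minima into a pivot cell `p`. -/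
lemma applyOps_min (p : Fin h) (js : List (Fin h)) (hp : p ∉ js) (hnd : js.Nodup) :
    ∀ s, applyOps (js.map (fun j => (p, j))) s p
      = js.foldl (fun acc j => min acc (s j)) (s p) := by
  induction js with
  | nil => intro s; rfl
  | cons j t ih =>
    intro s
    simp only [List.map_cons, List.foldl_cons]
    rw [applyOps_cons]
    have hp' : p ∉ t := fun hmem => hp (List.mem_cons_of_mem _ hmem)
    have hnd' : t.Nodup := hnd.of_cons
    rw [ih hp' hnd']
    have hpj : p ≠ j := fun he => hp (he ▸ List.mem_cons_self)
    have h1 : foldmap p j s p = min (s p) (s j) := foldmap_apply_fst _ _ _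
    have h2 : ∀ a ∈ t, foldmap p j s a = s a := by
      intro a ha
      have haj : a ≠ j := fun he => (List.nodup_cons.1 hnd).1 (he ▸ ha)
      have hap : a ≠ p := fun he => hp' (he ▸ ha)
      exact foldmap_apply_ne _ _ _ hap haj
    rw [h1]
    exact foldl_min_congr t _ _ _ (fun a ha => h2 a ha)

/-- Accumulating maxima into a pivot cell `q`. -/
lemma applyOps_max (q : Fin h) (js : List (Fin h)) (hq : q ∉ js) (hnd : js.Nodup) :
    ∀ s, applyOps (js.map (fun j => (j, q))) s q
      = js.foldl (fun acc j => max acc (s j)) (s q) := by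
  induction js with
  | nil => intro s; rfl
  | cons j t ih =>
    intro s
    simp only [List.map_cons, List.foldl_cons]
    rw [applyOps_cons]
    have hq' : q ∉ t := fun hmem => hq (List.mem_cons_of_mem _ hmem)
    have hnd' : t.Nodup := hnd.of_cons
    rw [ih hq' hnd']
    have hqj : q ≠ j := fun he => hq (he ▸ List.mem_cons_self)
    have h1 : foldmap j q s q = max (s j) (s q) := foldmap_apply_snd _ _ (Ne.symm hqj) _
    have h2 : ∀ a ∈ t, foldmap j q s a = s a := by
      intro a ha
      have haj : a ≠ j := fun he => (List.nodup_cons.1 hnd).1 (he ▸ ha)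
      have haq : a ≠ q := fun he => hq' (he ▸ ha)
      exact foldmap_apply_ne _ _ _ haj haq
    rw [h1, max_comm (s j) (s q)]
    exact foldl_max_congr t _ _ _ (fun a ha => h2 a ha)

end Stmt0Aux
end

noncomputable section
namespace Stmt0Aux
variable {n m : ℕ}

def cell (i : Fin (n+1)) (j : Fin (m+1)) : Fin ((n+1)*(m+1)) := finProdFinEquiv (i, j)

lemma cell_inj {i i' : Fin (n+1)} {j j' : Fin (m+1)} (hc : cell i j = cell i' j') :
    i = i' ∧ j = j' := by
  have := finProdFinEquiv.injective (α := Fin (n+1) × Fin (m+1)) hc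
  exact ⟨congrArg Prod.fst this, congrArg Prod.snd this⟩

lemma cell_ne {i i' : Fin (n+1)} {j j' : Fin (m+1)} (hne : i ≠ i' ∨ j ≠ j') :
    cell i j ≠ cell i' j' := by
  intro hc
  rcases cell_inj hc with ⟨h1, h2⟩
  rcases hne with hne | hne <;> exact hne (by assumption)

def jsM : List (Fin (m+1)) := (List.finRange m).map Fin.succ
def isN : List (Fin (n+1)) := (List.finRange n).map Fin.succ

lemma jsM_nodup : (jsM (m := m)).Nodup :=
  (List.nodup_finRange m).map (Fin.succ_injective m)

lemma jsM_ne_zero {j : Fin (m+1)} (hj : j ∈ (jsM (m := m))) : j ≠ 0 := by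
  rcases List.mem_map.1 hj with ⟨j', _, rfl⟩
  exact Fin.succ_ne_zero j'

lemma mem_jsM {j : Fin (m+1)} (hj : j ≠ 0) : j ∈ (jsM (m := m)) := by
  obtain ⟨j', rfl⟩ := Fin.exists_succ_eq.2 hj
  exact List.mem_map.2 ⟨j', List.mem_finRange _, rfl⟩

def blockOps (i : Fin (n+1)) : List (Fin ((n+1)*(m+1)) × Fin ((n+1)*(m+1))) :=
  (jsM (m := m)).map (fun j => (cell i 0, cell i j))

def bmin (s : EuclideanSpace ℝ (Fin ((n+1)*(m+1)))) (i : Fin (n+1)) : ℝ :=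
  (jsM (m := m)).foldl (fun acc j => min acc (s (cell i j))) (s (cell i 0))

def maxOps : List (Fin ((n+1)*(m+1)) × Fin ((n+1)*(m+1))) :=
  (isN (n := n)).map (fun i => (cell i 0, cell 0 0))

def netOps : List (Fin ((n+1)*(m+1)) × Fin ((n+1)*(m+1))) :=
  ((List.finRange (n+1)).flatMap (fun i => blockOps (m := m) i)) ++ maxOps

def netOut (s : EuclideanSpace ℝ (Fin ((n+1)*(m+1)))) : ℝ :=
  (isN (n := n)).foldl (fun acc i => max acc (bmin s i)) (bmin s 0)

lemma bmin_congr {s s' : EuclideanSpace ℝ (Fin ((n+1)*(m+1)))} (i : Fin (n+1))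
    (hs : ∀ j, s' (cell i j) = s (cell i j)) : bmin s' i = bmin s i := by
  unfold bmin
  rw [hs]
  exact foldl_min_congr _ _ _ _ (fun j _ => hs j)

lemma blockOps_untouched {i : Fin (n+1)} {c : Fin ((n+1)*(m+1))}
    (hc : ∀ j : Fin (m+1), c ≠ cell i j) (s) :
    applyOps (blockOps (m := m) i) s c = s c := by
  refine applyOps_apply_notMem _ (fun op hop => ?_) s
  rcases List.mem_map.1 hop with ⟨j, _, rfl⟩
  exact ⟨hc 0, hc j⟩

lemma blockOps_value (i : Fin (n+1)) (s) :
    applyOps (blockOps (m := m) i) s (cell i 0) = bmin s i := by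
  have hp : cell i (0 : Fin (m+1)) ∉ (jsM (m := m)).map (cell i) := by
    intro hmem
    rcases List.mem_map.1 hmem with ⟨j, hj, hcj⟩
    exact jsM_ne_zero hj (cell_inj hcj.symm).2.symm
  have hnd : ((jsM (m := m)).map (cell i)).Nodup :=
    jsM_nodup.map (fun a b hab => (cell_inj hab).2)
  have h1 : blockOps (m := m) i = ((jsM (m := m)).map (cell i)).map
      (fun j => (cell i 0, j)) := by
    unfold blockOps
    rw [List.map_map]
    rfl
  rw [h1, applyOps_min _ _ hp hnd s]
  unfold bmin
  rw [List.foldl_map]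

lemma flatMap_blocks_value (l : List (Fin (n+1))) (hnd : l.Nodup) :
    ∀ s, (∀ i ∈ l, applyOps (l.flatMap (fun i => blockOps (m := m) i)) s (cell i 0) = bmin s i)
      ∧ ∀ c, (∀ i ∈ l, ∀ j : Fin (m+1), c ≠ cell i j) →
        applyOps (l.flatMap (fun i => blockOps (m := m) i)) s c = s c := by
  induction l with
  | nil => intro s; exact ⟨fun i hi => absurd hi (List.not_mem_nil), fun c _ => rfl⟩
  | cons i₀ t ih =>
    intro s
    have hnd' : t.Nodup := hnd.of_cons
    have hi₀t : i₀ ∉ t := (List.nodup_cons.1 hnd).1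
    have hsplit : (i₀ :: t).flatMap (fun i => blockOps (m := m) i)
        = blockOps (m := m) i₀ ++ t.flatMap (fun i => blockOps (m := m) i) := by
      simp [List.flatMap_cons]
    set s' := applyOps (blockOps (m := m) i₀) s with hs'
    have happ : ∀ c, applyOps ((i₀ :: t).flatMap (fun i => blockOps (m := m) i)) s c
        = applyOps (t.flatMap (fun i => blockOps (m := m) i)) s' c := by
      intro c; rw [hsplit, applyOps_append]
    constructor
    · intro i hi
      rcases List.mem_cons.1 hi with rfl | hit
      · rw [happ]
        have h2 : applyOps (t.flatMap (fun i => blockOps (m := m) i)) s' (cell i 0)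
            = s' (cell i 0) := by
          refine (ih hnd' s').2 _ (fun i' hi' j => ?_)
          exact cell_ne (Or.inl (fun he => hi₀t (he ▸ hi')))
        rw [h2, hs', blockOps_value]
      · rw [happ, (ih hnd' s').1 i hit]
        refine bmin_congr i (fun j => ?_)
        rw [hs']
        refine blockOps_untouched (fun j' => ?_) s
        exact cell_ne (Or.inl (fun he => hi₀t (he ▸ hit)))
    · intro c hc
      rw [happ]
      have h2 : applyOps (t.flatMap (fun i => blockOps (m := m) i)) s' c = s' c :=
        (ih hnd' s').2 _ (fun i' hi' j => hc i' (List.mem_cons_of_mem _ hi') j)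
      rw [h2, hs']
      exact blockOps_untouched (fun j => hc i₀ (List.mem_cons_self) j) s

lemma netOps_ne : ∀ op ∈ (netOps (n := n) (m := m)), op.1 ≠ op.2 := by
  intro op hop
  rcases List.mem_append.1 hop with hop | hop
  · rcases List.mem_flatMap.1 hop with ⟨i, _, hop⟩
    rcases List.mem_map.1 hop with ⟨j, hj, rfl⟩
    exact cell_ne (Or.inr (Ne.symm (jsM_ne_zero hj)))
  · rcases List.mem_map.1 hop with ⟨i, hi, rfl⟩
    have : i ≠ 0 := by
      rcases List.mem_map.1 hi with ⟨i', _, rfl⟩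
      exact Fin.succ_ne_zero i'
    exact cell_ne (Or.inl this)

lemma netOps_value (s : EuclideanSpace ℝ (Fin ((n+1)*(m+1)))) :
    applyOps (netOps (n := n) (m := m)) s (cell 0 0) = netOut s := by
  unfold netOps
  rw [applyOps_append]
  set s₁ := applyOps ((List.finRange (n+1)).flatMap (fun i => blockOps (m := m) i)) s with hs₁
  have hblocks := flatMap_blocks_value (List.finRange (n+1)) (List.nodup_finRange _) s
  have hs₁v : ∀ i, s₁ (cell i 0) = bmin s i := fun i =>
    hblocks.1 i (List.mem_finRange _)
  -- now the max stage
  have hq : cell (0 : Fin (n+1)) (0 : Fin (m+1)) ∉ (isN (n := n)).map (fun i => cell i 0) := by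
    intro hmem
    rcases List.mem_map.1 hmem with ⟨i, hi, hci⟩
    rcases List.mem_map.1 hi with ⟨i', _, rfl⟩
    exact Fin.succ_ne_zero i' (cell_inj hci).1
  have hnd : ((isN (n := n)).map (fun i => cell i (0 : Fin (m+1)))).Nodup := by
    refine List.Nodup.map (fun a b hab => (cell_inj hab).1) ?_
    exact (List.nodup_finRange n).map (Fin.succ_injective n)
  have h1 : maxOps (n := n) (m := m) = ((isN (n := n)).map (fun i => cell i 0)).map
      (fun c => (c, cell 0 0)) := by
    unfold maxOps
    rw [List.map_map]
    rfl
  rw [h1, applyOps_max _ _ hq hnd s₁, List.foldl_map]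
  unfold netOut
  rw [hs₁v 0]
  exact foldl_max_congr _ _ _ _ (fun i _ => hs₁v i)

/-- Main realization lemma: the max-min of the coordinates is computed by a chain of
Euler steps, read off at coordinate `cell 0 0`. -/
lemma net_realizable : ∃ (L : ℕ)
    (Φ : Fin L → (EuclideanSpace ℝ (Fin ((n+1)*(m+1))) → EuclideanSpace ℝ (Fin ((n+1)*(m+1))))),
    (∀ ℓ, IsEulerStep (Φ ℓ)) ∧
    ∀ s, (compChain L Φ s) (cell 0 0) = netOut (n := n) (m := m) s := by
  obtain ⟨L, Φ, hΦ, hc⟩ := realizable_applyOps (netOps (n := n) (m := m)) netOps_ne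
  exact ⟨L, Φ, hΦ, fun s => by rw [hc s]; exact netOps_value s⟩

end Stmt0Aux
end

noncomputable section
namespace Stmt0Aux
variable {n m : ℕ}

lemma bmin_le (s : EuclideanSpace ℝ (Fin ((n+1)*(m+1)))) (i : Fin (n+1)) (j : Fin (m+1)) :
    bmin s i ≤ s (cell i j) := by
  by_cases hj : j = 0
  · subst hj; exact foldl_min_le_init _ _ _
  · exact foldl_min_le_mem _ _ (mem_jsM hj) _

lemma le_bmin (s : EuclideanSpace ℝ (Fin ((n+1)*(m+1)))) (i : Fin (n+1)) (c : ℝ)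
    (hc : ∀ j, c ≤ s (cell i j)) : c ≤ bmin s i :=
  le_foldl_min _ _ _ (fun j _ => hc j) _ (hc 0)

lemma bmin_le_netOut (s : EuclideanSpace ℝ (Fin ((n+1)*(m+1)))) (i : Fin (n+1)) :
    bmin s i ≤ netOut s := by
  by_cases hi : i = 0
  · subst hi; exact init_le_foldl_max _ _ _
  · refine mem_le_foldl_max _ _ ?_ _
    rcases Fin.exists_succ_eq.2 hi with ⟨i', rfl⟩
    exact List.mem_map.2 ⟨i', List.mem_finRange _, rfl⟩

lemma netOut_le (s : EuclideanSpace ℝ (Fin ((n+1)*(m+1)))) (c : ℝ)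
    (hc : ∀ i, bmin s i ≤ c) : netOut s ≤ c :=
  foldl_max_le _ _ _ (fun i _ => hc i) _ (hc 0)

lemma bmin_comp (s s' : EuclideanSpace ℝ (Fin ((n+1)*(m+1)))) (D : ℝ) (i : Fin (n+1))
    (h : ∀ j, s (cell i j) ≤ s' (cell i j) + D) : bmin s i ≤ bmin s' i + D :=
  foldl_min_comp _ _ _ _ (fun j _ => h j) _ _ (h 0)

lemma netOut_comp (s s' : EuclideanSpace ℝ (Fin ((n+1)*(m+1)))) (D : ℝ)
    (h : ∀ i j, s (cell i j) ≤ s' (cell i j) + D) : netOut s ≤ netOut s' + D :=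
  foldl_max_comp _ _ _ _ (fun i _ => bmin_comp s s' D i (h i)) _ _ (bmin_comp s s' D 0 (h 0))

/-- Extraction of a finite net from a compact nonempty set. -/
lemma exists_net {d : ℕ} {S : Set (EuclideanSpace ℝ (Fin d))} (hS : IsCompact S)
    (hne : S.Nonempty) {r : ℝ} (hr : 0 < r) :
    ∃ (k : ℕ) (p : Fin (k+1) → EuclideanSpace ℝ (Fin d)),
      (∀ i, p i ∈ S) ∧ ∀ x ∈ S, ∃ i, dist x (p i) < r := by
  classical
  obtain ⟨t, htS, htfin, hcov⟩ :=
    Metric.finite_approx_of_totallyBounded hS.totallyBounded r hr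
  have htne : t.Nonempty := by
    obtain ⟨x, hx⟩ := hne
    have := hcov hx
    rcases Set.mem_iUnion₂.1 this with ⟨y, hy, _⟩
    exact ⟨y, hy⟩
  set ft := htfin.toFinset with hft
  have hftne : ft.Nonempty := by
    obtain ⟨y, hy⟩ := htne
    exact ⟨y, htfin.mem_toFinset.2 hy⟩
  obtain ⟨k, hk⟩ : ∃ k, ft.card = k + 1 :=
    ⟨ft.card - 1, (Nat.succ_pred_eq_of_pos (Finset.card_pos.2 hftne)).symm⟩
  set e := ft.equivFin with he
  refine ⟨k, fun i => (e.symm (Fin.cast hk.symm i) : EuclideanSpace ℝ (Fin d)), ?_, ?_⟩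
  · intro i
    exact htS (htfin.mem_toFinset.1 (e.symm (Fin.cast hk.symm i)).2)
  · intro x hx
    rcases Set.mem_iUnion₂.1 (hcov hx) with ⟨y, hy, hxy⟩
    refine ⟨Fin.cast hk (e ⟨y, htfin.mem_toFinset.2 hy⟩), ?_⟩
    show dist x ((e.symm (Fin.cast hk.symm (Fin.cast hk (e ⟨y, htfin.mem_toFinset.2 hy⟩)))) :
      EuclideanSpace ℝ (Fin d)) < r
    have h1 : (Fin.cast hk.symm (Fin.cast hk (e ⟨y, htfin.mem_toFinset.2 hy⟩)))
        = e ⟨y, htfin.mem_toFinset.2 hy⟩ := rfl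
    rw [h1, Equiv.symm_apply_apply]
    exact Metric.mem_ball.1 hxy

end Stmt0Aux
end

/-- Universal approximation of scalar `1`-Lipschitz functions on a compact
set with at least two points by the class `G_{d,ReLU}(X,ℝ)`. -/
theorem stmt0 (d : ℕ) (X : Set (EuclideanSpace ℝ (Fin d)))
    (hX : IsCompact X) (htwo : ∃ x ∈ X, ∃ y ∈ X, x ≠ y)
    (f : EuclideanSpace ℝ (Fin d) → ℝ) (hf : LipschitzOnWith 1 f X)
    (ε : ℝ) (hε : 0 < ε) :
    ∃ g : EuclideanSpace ℝ (Fin d) → ℝ, InG X g ∧ ∀ x ∈ X, |f x - g x| < ε := by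
  classical
  open Stmt0Aux in
  obtain ⟨x₀, hx₀, y₀, hy₀, hxy⟩ := htwo
  obtain ⟨C, hC⟩ := isBounded_iff_forall_norm_le.1 hX.isBounded
  set C' : ℝ := max C 0 with hC'def
  have hC'0 : 0 ≤ C' := le_max_right _ _
  have hCX : ∀ z ∈ X, ‖z‖ ≤ C' := fun z hz => le_trans (hC z hz) (le_max_left _ _)
  have hε₁ : (0:ℝ) < ε/4 := by linarith
  have hden : (0:ℝ) < 8*(C'+1) := by positivity
  set δ : ℝ := ε/(8*(C'+1)) with hδdef
  have hδpos : (0:ℝ) < δ := by positivity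
  have hδε : δ * (8*(C'+1)) = ε := div_mul_cancel₀ _ (ne_of_gt hden)
  -- nets
  obtain ⟨n, p, hpX, hpcov⟩ := Stmt0Aux.exists_net hX ⟨x₀, hx₀⟩ hε₁
  have hx₀y₀ : x₀ - y₀ ≠ 0 := sub_ne_zero.2 hxy
  have hu₀ : ‖x₀ - y₀‖⁻¹ • (x₀ - y₀) ∈ Metric.sphere (0 : EuclideanSpace ℝ (Fin d)) 1 := by
    rw [mem_sphere_zero_iff_norm, norm_smul, norm_inv, norm_norm]
    exact inv_mul_cancel₀ (norm_ne_zero_iff.2 hx₀y₀)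
  obtain ⟨m, u, huS, hucov⟩ := Stmt0Aux.exists_net (isCompact_sphere 0 1) ⟨_, hu₀⟩ hδpos
  have hu1 : ∀ j, ‖u j‖ = 1 := fun j => mem_sphere_zero_iff_norm.1 (huS j)
  -- the network data
  set Qhat : Matrix (Fin ((n+1)*(m+1))) (Fin d) ℝ :=
    Matrix.of (fun r c => -(u (finProdFinEquiv.symm r).2 c)) with hQhatdef
  set qhat : EuclideanSpace ℝ (Fin ((n+1)*(m+1))) :=
    (WithLp.equiv 2 _).symm (fun r =>
      f (p (finProdFinEquiv.symm r).1)
        + ∑ c, u (finProdFinEquiv.symm r).2 c * p (finProdFinEquiv.symm r).1 c) with hqhatdef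
  set s₀ : EuclideanSpace ℝ (Fin d) → EuclideanSpace ℝ (Fin ((n+1)*(m+1))) :=
    fun x => matVec Qhat x + qhat with hs₀def
  have hval : ∀ (x : EuclideanSpace ℝ (Fin d)) (i : Fin (n+1)) (j : Fin (m+1)),
      s₀ x (Stmt0Aux.cell i j) = f (p i) + (inner ℝ (u j) (p i - x) : ℝ) := by
    intro x i j
    have h2 : (finProdFinEquiv.symm (Stmt0Aux.cell i j) : Fin (n+1) × Fin (m+1)) = (i, j) := by
      simp [Stmt0Aux.cell]
    have h1 : s₀ x (Stmt0Aux.cell i j)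
        = matVec Qhat x (Stmt0Aux.cell i j) + qhat (Stmt0Aux.cell i j) := by
      simp [hs₀def]
    have h3 : qhat (Stmt0Aux.cell i j) = f (p i) + ∑ c, u j c * p i c := by
      have e1 : qhat (Stmt0Aux.cell i j)
          = f (p (finProdFinEquiv.symm (Stmt0Aux.cell i j)).1)
            + ∑ c, u (finProdFinEquiv.symm (Stmt0Aux.cell i j)).2 c
                * p (finProdFinEquiv.symm (Stmt0Aux.cell i j)).1 c := rfl
      rw [e1, h2]
    have h4 : ∀ c, Qhat (Stmt0Aux.cell i j) c = -(u j c) := by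
      intro c
      have e1 : Qhat (Stmt0Aux.cell i j) c
          = -(u (finProdFinEquiv.symm (Stmt0Aux.cell i j)).2 c) := rfl
      rw [e1, h2]
    have h5 : (inner ℝ (u j) (p i - x) : ℝ) = ∑ c, u j c * (p i c - x c) := by
      simp [PiLp.inner_apply, RCLike.inner_apply, mul_comm]
    rw [h1, Stmt0Aux.matVec_apply, h3, h5]
    rw [Finset.sum_congr rfl (fun c _ => by rw [h4 c])]
    have h6 : ∑ c, u j c * (p i c - x c) = ∑ c, u j c * p i c - ∑ c, u j c * x c := by
      rw [Finset.sum_congr rfl (fun c (_ : c ∈ Finset.univ) => mul_sub (u j c) (p i c) (x c)),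
        Finset.sum_sub_distrib]
    have h7 : ∑ c, -(u j c) * x c = -∑ c, u j c * x c := by
      simp [neg_mul]
    rw [h6, h7]
    ring
  set g : EuclideanSpace ℝ (Fin d) → ℝ := fun x => Stmt0Aux.netOut (s₀ x) with hgdef
  -- Lipschitz
  have hinner_le : ∀ (j : Fin (m+1)) (y : EuclideanSpace ℝ (Fin d)),
      |(inner ℝ (u j) y : ℝ)| ≤ ‖y‖ := by
    intro j y
    calc |(inner ℝ (u j) y : ℝ)| ≤ ‖u j‖ * ‖y‖ := abs_real_inner_le_norm _ _
      _ = ‖y‖ := by rw [hu1 j, one_mul]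
  have hstep : ∀ (x y : EuclideanSpace ℝ (Fin d)) (i : Fin (n+1)) (j : Fin (m+1)),
      s₀ x (Stmt0Aux.cell i j) ≤ s₀ y (Stmt0Aux.cell i j) + dist x y := by
    intro x y i j
    rw [hval, hval]
    have h1 : (inner ℝ (u j) (p i - x) : ℝ) - (inner ℝ (u j) (p i - y) : ℝ)
        = (inner ℝ (u j) (y - x) : ℝ) := by
      rw [← inner_sub_right]
      congr 1
      abel
    have h2 := hinner_le j (y - x)
    have h3 : ‖y - x‖ = dist x y := by rw [← dist_eq_norm, dist_comm]
    have h4 := le_abs_self ((inner ℝ (u j) (y - x) : ℝ))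
    linarith
  have hgle : ∀ x y, g x ≤ g y + dist x y := fun x y =>
    Stmt0Aux.netOut_comp (s₀ x) (s₀ y) (dist x y) (fun i j => hstep x y i j)
  have hLipg : LipschitzWith 1 g := by
    refine LipschitzWith.of_dist_le_mul (fun x y => ?_)
    rw [Real.dist_eq, NNReal.coe_one, one_mul, abs_sub_le_iff]
    have h1 := hgle x y
    have h2 := hgle y x
    rw [dist_comm y x] at h2
    constructor <;> linarith
  -- realization
  obtain ⟨L, Φ, hΦ, hout⟩ := Stmt0Aux.net_realizable (n := n) (m := m)
  -- approximation bounds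
  have hlow : ∀ x ∈ X, f x - ε/2 ≤ g x := by
    intro x hx
    obtain ⟨i, hi⟩ := hpcov x hx
    refine le_trans ?_ (Stmt0Aux.bmin_le_netOut (s₀ x) i)
    refine Stmt0Aux.le_bmin _ _ _ (fun j => ?_)
    rw [hval]
    have h1 : |(inner ℝ (u j) (p i - x) : ℝ)| ≤ ‖p i - x‖ := hinner_le j _
    have h2 : ‖p i - x‖ = dist x (p i) := by rw [← dist_eq_norm, dist_comm]
    have h3 : dist (f (p i)) (f x) ≤ 1 * dist (p i) x :=
      hf.dist_le_mul (p i) (hpX i) x hx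
    rw [Real.dist_eq, one_mul] at h3
    have h4 := abs_le.1 h3
    have h5 := abs_le.1 h1
    rw [dist_comm] at hi
    have h6 : dist (p i) x = dist x (p i) := dist_comm _ _
    linarith [hi]
  have hup : ∀ x ∈ X, g x ≤ f x + ε/2 := by
    intro x hx
    have hb : ∀ i : Fin (n+1), Stmt0Aux.bmin (s₀ x) i ≤ f x + δ * (2*C') := by
      intro i
      have hfpi : f (p i) ≤ f x + ‖p i - x‖ := by
        have h3 : dist (f (p i)) (f x) ≤ 1 * dist (p i) x :=
          hf.dist_le_mul (p i) (hpX i) x hx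
        rw [Real.dist_eq, one_mul, dist_eq_norm] at h3
        linarith [(abs_le.1 h3).2]
      have hnz : ‖p i - x‖ ≤ 2*C' := by
        calc ‖p i - x‖ ≤ ‖p i‖ + ‖x‖ := norm_sub_le _ _
          _ ≤ C' + C' := add_le_add (hCX _ (hpX i)) (hCX _ hx)
          _ = 2*C' := by ring
      by_cases hz : x - p i = 0
      · have hpix : p i - x = 0 := by
          rw [← neg_sub x (p i), hz, neg_zero]
        refine le_trans (Stmt0Aux.bmin_le (s₀ x) i 0) ?_
        rw [hval, hpix, inner_zero_right]
        have : f (p i) = f x := by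
          have : p i = x := by rwa [sub_eq_zero] at hpix
          rw [this]
        rw [this]
        nlinarith
      · set z := x - p i with hzdef
        have hzn : ‖z‖ ≠ 0 := norm_ne_zero_iff.2 hz
        have hznpos : 0 < ‖z‖ := norm_pos_iff.2 hz
        have hzsph : ‖z‖⁻¹ • z ∈ Metric.sphere (0 : EuclideanSpace ℝ (Fin d)) 1 := by
          rw [mem_sphere_zero_iff_norm, norm_smul, norm_inv, norm_norm]
          exact inv_mul_cancel₀ hzn
        obtain ⟨j, hj⟩ := hucov _ hzsph
        refine le_trans (Stmt0Aux.bmin_le (s₀ x) i j) ?_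
        rw [hval]
        have hpz : p i - x = -z := by rw [hzdef]; abel
        have hkey : (inner ℝ (u j) (p i - x) : ℝ) ≤ -‖z‖ + δ * ‖z‖ := by
          rw [hpz, inner_neg_right]
          have e1 : (inner ℝ (‖z‖⁻¹ • z) z : ℝ) = ‖z‖ := by
            rw [real_inner_smul_left, real_inner_self_eq_norm_sq]
            field_simp
          have e2 : (inner ℝ (u j) z : ℝ)
              = ‖z‖ - (inner ℝ ((‖z‖⁻¹ • z) - u j) z : ℝ) := by
            rw [inner_sub_left, e1]
            ring
          have e3 : |(inner ℝ ((‖z‖⁻¹ • z) - u j) z : ℝ)| ≤ δ * ‖z‖ := by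
            calc |(inner ℝ ((‖z‖⁻¹ • z) - u j) z : ℝ)|
                ≤ ‖(‖z‖⁻¹ • z) - u j‖ * ‖z‖ := abs_real_inner_le_norm _ _
              _ ≤ δ * ‖z‖ := by
                  have : ‖(‖z‖⁻¹ • z) - u j‖ = dist (‖z‖⁻¹ • z) (u j) := (dist_eq_norm _ _).symm
                  rw [this]
                  exact mul_le_mul_of_nonneg_right (le_of_lt hj) (norm_nonneg _)
          have e4 := (abs_le.1 e3).2
          rw [e2]
          linarith
        have hzz : ‖p i - x‖ = ‖z‖ := by rw [hpz, norm_neg]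
        have hδz : δ * ‖z‖ ≤ δ * (2*C') := by
          apply mul_le_mul_of_nonneg_left _ (le_of_lt hδpos)
          rw [← hzz]
          exact hnz
        rw [hzz] at hfpi
        linarith
    have hδC : δ * (2*C') ≤ ε/2 := by nlinarith
    have := Stmt0Aux.netOut_le (s₀ x) _ hb
    linarith
  -- assemble
  refine ⟨g, ⟨hLipg.lipschitzOnWith, (n+1)*(m+1), L, Qhat, qhat, Φ,
    EuclideanSpace.single (Stmt0Aux.cell 0 0) 1, hΦ, ?_, ?_⟩, ?_⟩
  · rw [EuclideanSpace.norm_single, norm_one]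
  · intro x _
    have hsum : ∀ z : EuclideanSpace ℝ (Fin ((n+1)*(m+1))),
        ∑ i, (EuclideanSpace.single (Stmt0Aux.cell (n := n) (m := m) 0 0) (1:ℝ)) i * z i
          = z (Stmt0Aux.cell 0 0) := by
      intro z
      simp [EuclideanSpace.single_apply, ite_mul, Finset.sum_ite_eq']
    rw [hsum]
    rw [hout (matVec Qhat x + qhat)]
  · intro x hx
    rw [abs_sub_lt_iff]
    have h1 := hlow x hx
    have h2 := hup x hx
    constructor <;> linarith
end

section
/- Let σ : ℝ → ℝ be 1-Lipschitz and non-decreasing, and define Φ : ℝ^h → ℝ^h by Φ(x) = x − τ Wᵀ σ(Wx + b), where σ acts entrywise, W ∈ ℝ^{k×h}, b ∈ ℝ^k, and τ ∈ ℝ satisfies 0 ≤ τ and τ‖W‖₂² ≤ 2 (with ‖W‖₂ the spectral norm). Then Φ is 1-Lipschitz with respect to the Euclidean ℓ² norm, i.e. ‖Φ(y) − Φ(x)‖₂ ≤ ‖y − x‖₂ for all x, y ∈ ℝ^h. -/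
open scoped BigOperators

open scoped InnerProductSpace

lemma key (σ : ℝ → ℝ) (hσ : LipschitzWith 1 σ) (hmono : Monotone σ) (s t : ℝ) :
    (σ s - σ t) ^ 2 ≤ (σ s - σ t) * (s - t) := by
  have hl := hσ.dist_le_mul s t
  rw [Real.dist_eq, Real.dist_eq] at hl
  simp only [NNReal.coe_one, one_mul] at hl
  rcases le_total t s with hst | hst
  · have h1 : σ t ≤ σ s := hmono hst
    have h2 : σ s - σ t ≤ s - t := by
      rw [abs_of_nonneg (by linarith : 0 ≤ σ s - σ t),
        abs_of_nonneg (by linarith : 0 ≤ s - t)] at hl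
      linarith
    nlinarith
  · have h1 : σ s ≤ σ t := hmono hst
    have h2 : σ t - σ s ≤ t - s := by
      rw [abs_of_nonpos (by linarith : σ s - σ t ≤ 0),
        abs_of_nonpos (by linarith : s - t ≤ 0)] at hl
      linarith
    nlinarith

set_option maxHeartbeats 1000000

/-- A residual layer `x ↦ x - τ Wᵀ σ(Wx + b)` with `σ` 1-Lipschitz and
non-decreasing, `0 ≤ τ` and `τ‖W‖₂² ≤ 2`, is `1`-Lipschitz in the Euclidean norm. -/
theorem stmt1 (h k : ℕ) (σ : ℝ → ℝ) (hσ : LipschitzWith 1 σ) (hmono : Monotone σ)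
    (W : Matrix (Fin k) (Fin h) ℝ) (b : EuclideanSpace ℝ (Fin k)) (τ : ℝ)
    (hτ0 : 0 ≤ τ) (hτ : τ * specNorm W ^ 2 ≤ 2) :
    ∀ x y : EuclideanSpace ℝ (Fin h),
      ‖(y - τ • matVec W.transpose (entrywise σ (matVec W y + b))) -
        (x - τ • matVec W.transpose (entrywise σ (matVec W x + b)))‖ ≤ ‖y - x‖ := by
  intro x y
  set A := Matrix.toEuclideanLin W with hA
  set u : EuclideanSpace ℝ (Fin h) := y - x with hu
  set s : EuclideanSpace ℝ (Fin k) := matVec W y + b with hs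
  set t : EuclideanSpace ℝ (Fin k) := matVec W x + b with ht
  set Δ : EuclideanSpace ℝ (Fin k) := entrywise σ s - entrywise σ t with hΔ
  set v : EuclideanSpace ℝ (Fin h) := matVec W.transpose Δ with hv
  set N := specNorm W with hN
  have hN0 : 0 ≤ N := norm_nonneg _
  -- rewrite the goal
  have hgoal : (y - τ • matVec W.transpose (entrywise σ s)) -
      (x - τ • matVec W.transpose (entrywise σ t)) = u - τ • v := by
    have : matVec W.transpose (entrywise σ s) - matVec W.transpose (entrywise σ t) = v := by
      simp [hv, hΔ, matVec, map_sub]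
    rw [← this]
    simp only [smul_sub, hu]
    abel
  rw [hgoal]
  -- adjoint identity
  have hWT : W.transpose = W.conjTranspose := by
    ext i j; simp [Matrix.conjTranspose_apply]
  have hadj : ∀ (a : EuclideanSpace ℝ (Fin k)) (c : EuclideanSpace ℝ (Fin h)),
      ⟪matVec W.transpose a, c⟫_ℝ = ⟪a, A c⟫_ℝ := by
    intro a c
    rw [show matVec W.transpose a = Matrix.toEuclideanLin W.transpose a from rfl, hWT,
      Matrix.toEuclideanLin_conjTranspose_eq_adjoint]
    exact LinearMap.adjoint_inner_left A c a
  -- coordinates of A u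
  have hcoord : ∀ i, (A u) i = s i - t i := by
    intro i
    have : A u = s - t := by
      simp [hu, hs, ht, matVec, map_sub, hA]
    rw [this]; rfl
  -- inner bound
  have h1 : ‖Δ‖ ^ 2 ≤ ⟪A u, Δ⟫_ℝ := by
    rw [← real_inner_self_eq_norm_sq, PiLp.inner_apply, PiLp.inner_apply]
    apply Finset.sum_le_sum
    intro i _
    have hΔi : Δ i = σ (s i) - σ (t i) := by simp [hΔ, entrywise]
    simp only [RCLike.inner_apply, conj_trivial, hcoord i, hΔi]
    have := key σ hσ hmono (s i) (t i)
    nlinarith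
  -- operator norm bounds
  have hopA : ∀ z : EuclideanSpace ℝ (Fin h), ‖A z‖ ≤ N * ‖z‖ := by
    intro z
    exact (LinearMap.toContinuousLinearMap A).le_opNorm z
  have hvle : ‖v‖ ≤ N * ‖Δ‖ := by
    have hsq : ‖v‖ ^ 2 ≤ ‖Δ‖ * (N * ‖v‖) := by
      calc ‖v‖ ^ 2 = ⟪v, v⟫_ℝ := (real_inner_self_eq_norm_sq v).symm
        _ = ⟪Δ, A v⟫_ℝ := hadj Δ v
        _ ≤ ‖Δ‖ * ‖A v‖ := real_inner_le_norm Δ (A v)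
        _ ≤ ‖Δ‖ * (N * ‖v‖) := by
            exact mul_le_mul_of_nonneg_left (hopA v) (norm_nonneg _)
    by_cases hvz : ‖v‖ = 0
    · rw [hvz]; positivity
    · have hvpos : 0 < ‖v‖ := lt_of_le_of_ne (norm_nonneg _) (Ne.symm hvz)
      nlinarith [norm_nonneg Δ]
  -- expand squared norm
  have hexp : ‖u - τ • v‖ ^ 2 = ‖u‖ ^ 2 - 2 * (τ * ⟪u, v⟫_ℝ) + τ ^ 2 * ‖v‖ ^ 2 := by
    rw [norm_sub_sq_real, real_inner_smul_right, norm_smul]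
    rw [Real.norm_eq_abs, mul_pow, sq_abs]
  have hinner : ⟪u, v⟫_ℝ = ⟪A u, Δ⟫_ℝ := by
    rw [real_inner_comm, hadj Δ u, real_inner_comm]
  have hfinal : ‖u - τ • v‖ ^ 2 ≤ ‖u‖ ^ 2 := by
    rw [hexp, hinner]
    have hv2 : τ ^ 2 * ‖v‖ ^ 2 ≤ τ ^ 2 * (N ^ 2 * ‖Δ‖ ^ 2) := by
      apply mul_le_mul_of_nonneg_left _ (sq_nonneg τ)
      nlinarith [norm_nonneg v, norm_nonneg Δ]
    nlinarith [mul_le_mul_of_nonneg_left h1 hτ0,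
      mul_nonneg (by linarith : (0:ℝ) ≤ 2 - τ * N ^ 2)
        (mul_nonneg hτ0 (sq_nonneg ‖Δ‖))]
  exact (pow_le_pow_iff_left₀ (norm_nonneg _) (norm_nonneg _) two_ne_zero).mp hfinal
end

section
/- There exist matrices W₁, W₂, W₃ ∈ ℝ^{1×3}, each with spectral norm ‖W_i‖₂ ≤ 1, such that, defining Φ_i : ℝ³ → ℝ³ by Φ_i(x) = x − 2 W_iᵀ ReLU(W_i x), the composition satisfies (Φ₃ ∘ Φ₂ ∘ Φ₁)(x) = (max{x₁,x₂,x₃}, median{x₁,x₂,x₃}, min{x₁,x₂,x₃}) for all x ∈ ℝ³, i.e. it sorts the three coordinates of any input in descending order. In particular, the full-sort map GroupSort(·;3) on ℝ³ is a composition of three maps in E_{3,σ} with σ = ReLU. -/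
open scoped BigOperators

noncomputable section

def swapW (i j : Fin 3) : Matrix (Fin 1) (Fin 3) ℝ :=
  Matrix.of fun _ k => if k = i then -(Real.sqrt 2)⁻¹ else if k = j then (Real.sqrt 2)⁻¹ else 0

lemma matVec_apply {k h : ℕ} (W : Matrix (Fin k) (Fin h) ℝ) (x : EuclideanSpace ℝ (Fin h))
    (i : Fin k) : matVec W x i = ∑ j, W i j * x j := by
  rw [matVec, Matrix.toEuclideanLin_apply]; rfl

lemma matVec_swapW (i j : Fin 3) (hij : i ≠ j) (x : EuclideanSpace ℝ (Fin 3)) :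
    matVec (swapW i j) x 0 = (Real.sqrt 2)⁻¹ * (x j - x i) := by
  rw [matVec_apply, Fin.sum_univ_three]
  fin_cases i <;> fin_cases j <;> simp_all [swapW] <;> ring

lemma relu_mul (c t : ℝ) (hc : 0 ≤ c) : relu (c * t) = c * relu t := by
  rcases le_total t 0 with h | h
  · rw [relu, relu, max_eq_right h, max_eq_right (by nlinarith), mul_zero]
  · rw [relu, relu, max_eq_left h, max_eq_left (by nlinarith)]

lemma sqrt2_sq : (Real.sqrt 2)⁻¹ * (Real.sqrt 2)⁻¹ = 1/2 := by
  rw [← mul_inv, Real.mul_self_sqrt (by norm_num : (0:ℝ) ≤ 2)]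
  norm_num

lemma max_sub (a b : ℝ) : a + relu (b - a) = max a b := by
  rcases le_total a b with h | h
  · rw [relu, max_eq_left (by linarith), max_eq_right h]; ring
  · rw [relu, max_eq_right (by linarith), max_eq_left h]; ring

lemma min_sub (a b : ℝ) : b - relu (b - a) = min a b := by
  rcases le_total a b with h | h
  · rw [relu, max_eq_left (by linarith), min_eq_left h]; ring
  · rw [relu, max_eq_right (by linarith), min_eq_right h]; ring

lemma layer_apply (i j : Fin 3) (hij : i ≠ j) (x : EuclideanSpace ℝ (Fin 3)) :
    x - (2 : ℝ) • matVec (swapW i j).transpose (entrywise relu (matVec (swapW i j) x)) =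
      (WithLp.toLp 2 (fun k => if k = i then max (x i) (x j) else if k = j then min (x i) (x j) else x k) :
        EuclideanSpace ℝ (Fin 3)) := by
  ext k
  rw [PiLp.toLp_apply]
  have hsub : (x - (2 : ℝ) • matVec (swapW i j).transpose (entrywise relu (matVec (swapW i j) x))) k
      = x k - 2 * matVec (swapW i j).transpose (entrywise relu (matVec (swapW i j) x)) k := rfl
  rw [hsub, matVec_apply, Fin.sum_univ_one]
  have he : entrywise relu (matVec (swapW i j) x) 0 = (Real.sqrt 2)⁻¹ * relu (x j - x i) := by
    rw [entrywise, PiLp.toLp_apply, matVec_swapW i j hij, relu_mul _ _ (by positivity)]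
  rw [he, Matrix.transpose_apply]
  simp only [PiLp.toLp_apply]
  rcases eq_or_ne k i with hk | hk
  · subst hk
    rw [if_pos rfl]
    simp only [swapW, Matrix.of_apply, if_true]
    rw [← max_sub (x k) (x j)]
    linear_combination 2 * relu (x j - x k) * sqrt2_sq
  · rw [if_neg hk]
    rcases eq_or_ne k j with hk2 | hk2
    · subst hk2
      rw [if_pos rfl]
      simp only [swapW, Matrix.of_apply, if_neg hk, if_true]
      rw [← min_sub (x i) (x k)]
      linear_combination (-2) * relu (x k - x i) * sqrt2_sq
    · rw [if_neg hk2]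
      simp only [swapW, Matrix.of_apply, if_neg hk, if_neg hk2]
      ring

lemma specNorm_swapW (i j : Fin 3) (hij : i ≠ j) : specNorm (swapW i j) ≤ 1 := by
  rw [specNorm]
  apply ContinuousLinearMap.opNorm_le_bound _ zero_le_one
  intro x
  rw [one_mul]
  have h1 : (LinearMap.toContinuousLinearMap (Matrix.toEuclideanLin (swapW i j))) x
      = matVec (swapW i j) x := rfl
  rw [h1, EuclideanSpace.norm_eq, EuclideanSpace.norm_eq, Fin.sum_univ_one,
    matVec_swapW i j hij]
  apply Real.sqrt_le_sqrt
  simp only [Real.norm_eq_abs, sq_abs, Fin.sum_univ_three]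
  have key : ∀ a b : ℝ, ((Real.sqrt 2)⁻¹ * (a - b))^2 ≤ a^2 + b^2 := by
    intro a b
    rw [mul_pow, sq (Real.sqrt 2)⁻¹, sqrt2_sq]
    nlinarith [sq_nonneg (a + b)]
  fin_cases i <;> fin_cases j <;> simp_all <;>
    linarith [key (x 0) (x 1), key (x 1) (x 0), key (x 0) (x 2), key (x 2) (x 0),
      key (x 1) (x 2), key (x 2) (x 1), sq_nonneg (x 0), sq_nonneg (x 1), sq_nonneg (x 2)]

lemma max3 (a b c : ℝ) : max (max a b) (max (min a b) c) = max a (max b c) := by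
  rcases le_total a b with h|h <;> rcases le_total b c with h'|h' <;>
    rcases le_total a c with h''|h'' <;> simp [max_def, min_def] <;>
    split_ifs <;> linarith

lemma med3 (a b c : ℝ) :
    min (max a b) (max (min a b) c) = max (min a b) (min c (max a b)) := by
  rcases le_total a b with h|h <;> rcases le_total b c with h'|h' <;>
    rcases le_total a c with h''|h'' <;> simp [max_def, min_def] <;>
    split_ifs <;> linarith

end

/-- Three residual layers `x ↦ x - 2 W_iᵀ ReLU(W_i x)` with `‖W_i‖₂ ≤ 1`
sort the three coordinates of any `x ∈ ℝ³` in descending order (max, median, min); in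
particular each layer lies in `E_{3,ReLU}`, so `GroupSort(·;3)` is a composition of three
maps in `E_{3,ReLU}`. -/
theorem stmt17 :
    ∃ W₁ W₂ W₃ : Matrix (Fin 1) (Fin 3) ℝ,
      specNorm W₁ ≤ 1 ∧ specNorm W₂ ≤ 1 ∧ specNorm W₃ ≤ 1 ∧
      IsEulerStep (fun x : EuclideanSpace ℝ (Fin 3) =>
        x - (2 : ℝ) • matVec W₁.transpose (entrywise relu (matVec W₁ x))) ∧
      IsEulerStep (fun x : EuclideanSpace ℝ (Fin 3) =>
        x - (2 : ℝ) • matVec W₂.transpose (entrywise relu (matVec W₂ x))) ∧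
      IsEulerStep (fun x : EuclideanSpace ℝ (Fin 3) =>
        x - (2 : ℝ) • matVec W₃.transpose (entrywise relu (matVec W₃ x))) ∧
      ∀ x : EuclideanSpace ℝ (Fin 3),
        (fun y : EuclideanSpace ℝ (Fin 3) =>
            y - (2 : ℝ) • matVec W₃.transpose (entrywise relu (matVec W₃ y)))
          ((fun y : EuclideanSpace ℝ (Fin 3) =>
            y - (2 : ℝ) • matVec W₂.transpose (entrywise relu (matVec W₂ y)))
          ((fun y : EuclideanSpace ℝ (Fin 3) =>
            y - (2 : ℝ) • matVec W₁.transpose (entrywise relu (matVec W₁ y))) x)) =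
          (fun i : Fin 3 =>
            if i = 0 then max (x 0) (max (x 1) (x 2))
            else if i = 1 then max (min (x 0) (x 1)) (min (x 2) (max (x 0) (x 1)))
            else min (x 0) (min (x 1) (x 2))) := by
  have h01 : (0:Fin 3) ≠ 1 := by decide
  have h12 : (1:Fin 3) ≠ 2 := by decide
  refine ⟨swapW 0 1, swapW 1 2, swapW 0 1, specNorm_swapW 0 1 h01, specNorm_swapW 1 2 h12,
    specNorm_swapW 0 1 h01,
    ⟨1, swapW 0 1, 0, 2, by norm_num, le_refl 2, specNorm_swapW 0 1 h01, fun x => by rw [add_zero]⟩,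
    ⟨1, swapW 1 2, 0, 2, by norm_num, le_refl 2, specNorm_swapW 1 2 h12, fun x => by rw [add_zero]⟩,
    ⟨1, swapW 0 1, 0, 2, by norm_num, le_refl 2, specNorm_swapW 0 1 h01, fun x => by rw [add_zero]⟩,
    ?_⟩
  intro x
  simp only []
  rw [layer_apply 0 1 h01, layer_apply 1 2 h12, layer_apply 0 1 h01]
  funext k
  fin_cases k <;> simp <;>
    first
    | exact max3 (x 0) (x 1) (x 2)
    | exact med3 (x 0) (x 1) (x 2)
    | exact min_assoc (x 0) (x 1) (x 2)
end
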